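/- Let (X,d) be a metric space and G ⊂ X an open set with nonempty boundary ∂G. Then the Gehring–Osgood metric j̃_G(x,y) = (1/2)·log((1 + d(x,y)/δ(x))·(1 + d(x,y)/δ(y))), where δ(x) = dist(x, ∂G), is Gromov hyperbolic on G with Gromov constant δ ≤ (1/4)·log 24: for all x,y,z,w ∈ G, j̃_G(x,z) + j̃_G(y,w) ≤ max{ j̃_G(x,w) + j̃_G(y,z), j̃_G(x,y) + j̃_G(z,w) } + (1/2)·log 24. -/

import Mathlib

open Real Filter

/-- The Gehring–Osgood metric associated to an open set `G`, where
`δ(x) = dist(x, ∂G)`. -/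
noncomputable def jGehringOsgood {X : Type*} [MetricSpace X] (G : Set X) (x y : X) : ℝ :=
  (1 / 2) * Real.log ((1 + dist x y / Metric.infDist x (frontier G)) *
    (1 + dist x y / Metric.infDist y (frontier G)))

private lemma go_core {A A' B B' M M' P1 P2 P3 P4 : ℝ}
    (hA : 0 ≤ A) (hA' : 0 ≤ A') (hB : 0 ≤ B) (hB' : 0 ≤ B')
    (hP2 : 0 ≤ P2) (hP3 : 0 ≤ P3) (hP4 : 0 ≤ P4)
    (h1 : P1 ≤ A + M) (h2 : P2 ≤ M' + A') (h3 : P3 ≤ M + B) (h4 : P4 ≤ B' + M)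
    (m1 : M ≤ A) (m2 : M ≤ A') (m3 : M ≤ B) (m4 : M ≤ B') (m' : M' ≤ 2 * M) :
    P1 * P2 * P3 * P4 ≤ 24 * (A * A' * B * B') := by
  have b1 : P1 ≤ 2 * A := by linarith
  have b2 : P2 ≤ 3 * A' := by linarith
  have b3 : P3 ≤ 2 * B := by linarith
  have b4 : P4 ≤ 2 * B' := by linarith
  have h12 : P1 * P2 ≤ (2 * A) * (3 * A') := mul_le_mul b1 b2 hP2 (by linarith)
  have h34 : P3 * P4 ≤ (2 * B) * (2 * B') := mul_le_mul b3 b4 hP4 (by linarith)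
  have h1234 : (P1 * P2) * (P3 * P4) ≤ ((2 * A) * (3 * A')) * ((2 * B) * (2 * B')) :=
    mul_le_mul h12 h34 (mul_nonneg hP3 hP4) (by positivity)
  nlinarith [h1234]

set_option maxHeartbeats 1000000 in
private lemma go_key {dx dy dz dw a b g e c h : ℝ}
    (hdx : 0 < dx) (hdy : 0 < dy) (hdz : 0 < dz) (hdw : 0 < dw)
    (hg : 0 ≤ g) (he : 0 ≤ e) (hc : 0 ≤ c) (hh : 0 ≤ h)
    (ha : 0 ≤ a) (hb : 0 ≤ b)
    (ta1 : a ≤ g + e) (ta2 : a ≤ c + h) (tb1 : b ≤ g + c) (tb2 : b ≤ e + h)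
    (lxy : dy ≤ dx + g) (lyx : dx ≤ dy + g)
    (lyz : dz ≤ dy + e) (lzy : dy ≤ dz + e)
    (lxw : dw ≤ dx + c) (lwx : dx ≤ dw + c)
    (lzw : dw ≤ dz + h) (lwz : dz ≤ dw + h) :
    (dx + a) * ((dz + a) * ((dy + b) * (dw + b))) ≤
      24 * ((dx + c) * ((dw + c) * ((dy + e) * (dz + e)))) ∨
    (dx + a) * ((dz + a) * ((dy + b) * (dw + b))) ≤
      24 * ((dz + h) * ((dw + h) * ((dy + g) * (dx + g)))) := by
  -- letters: G = dx+g, G' = dy+g, E = dy+e, E' = dz+e, C = dx+c, C' = dw+c,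
  -- H = dz+h, H' = dw+h; U1 = dx+a, U2 = dz+a, V1 = dy+b, V2 = dw+b
  rcases le_total (min (min (dy + e) (dz + e)) (min (dx + c) (dw + c)))
      (min (min (dx + g) (dy + g)) (min (dz + h) (dw + h))) with hm | hm
  · -- min is among E, E', C, C' : conclude the (g,h) branch
    right
    rcases le_total (min (dy + e) (dz + e)) (min (dx + c) (dw + c)) with h2 | h2
    · rcases le_total (dy + e) (dz + e) with h3 | h3
      · -- M = E = dy+e, M' = E' = dz+e
        have hM : dy + e ≤ min (min (dx + g) (dy + g)) (min (dz + h) (dw + h)) :=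
          le_trans (le_min (le_min le_rfl h3) (le_trans (le_min le_rfl h3) h2)) hm
        simp only [le_min_iff] at hM
        obtain ⟨⟨q1, q2⟩, q3, q4⟩ := hM
        have := go_core (A := dx + g) (A' := dy + g) (B := dz + h) (B' := dw + h)
          (M := dy + e) (M' := dz + e) (P1 := dx + a) (P2 := dz + a) (P3 := dy + b)
          (P4 := dw + b)
          (by linarith) (by linarith) (by linarith) (by linarith)
          (by linarith) (by linarith) (by linarith)
          (by linarith) (by linarith) (by linarith) (by linarith)
          q1 q2 q3 q4 (by linarith)
        linarith [this]
      · -- M = E' = dz+e, M' = E = dy+e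
        have hM : dz + e ≤ min (min (dx + g) (dy + g)) (min (dz + h) (dw + h)) :=
          le_trans (le_min (le_min h3 le_rfl) (le_trans (le_min h3 le_rfl) h2)) hm
        simp only [le_min_iff] at hM
        obtain ⟨⟨q1, q2⟩, q3, q4⟩ := hM
        have := go_core (A := dx + g) (A' := dz + h) (B := dy + g) (B' := dw + h)
          (M := dz + e) (M' := dy + e) (P1 := dx + a) (P2 := dy + b) (P3 := dz + a)
          (P4 := dw + b)
          (by linarith) (by linarith) (by linarith) (by linarith)
          (by linarith) (by linarith) (by linarith)
          (by linarith) (by linarith) (by linarith) (by linarith)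
          q1 q3 q2 q4 (by linarith)
        linarith [this]
    · rcases le_total (dx + c) (dw + c) with h3 | h3
      · -- M = C = dx+c, M' = C' = dw+c
        have hM : dx + c ≤ min (min (dx + g) (dy + g)) (min (dz + h) (dw + h)) :=
          le_trans (le_min (le_trans (le_min le_rfl h3) h2) (le_min le_rfl h3)) hm
        simp only [le_min_iff] at hM
        obtain ⟨⟨q1, q2⟩, q3, q4⟩ := hM
        have := go_core (A := dw + h) (A' := dx + g) (B := dz + h) (B' := dy + g)
          (M := dx + c) (M' := dw + c) (P1 := dx + a) (P2 := dw + b) (P3 := dz + a)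
          (P4 := dy + b)
          (by linarith) (by linarith) (by linarith) (by linarith)
          (by linarith) (by linarith) (by linarith)
          (by linarith) (by linarith) (by linarith) (by linarith)
          q4 q1 q3 q2 (by linarith)
        linarith [this]
      · -- M = C' = dw+c, M' = C = dx+c
        have hM : dw + c ≤ min (min (dx + g) (dy + g)) (min (dz + h) (dw + h)) :=
          le_trans (le_min (le_trans (le_min h3 le_rfl) h2) (le_min h3 le_rfl)) hm
        simp only [le_min_iff] at hM
        obtain ⟨⟨q1, q2⟩, q3, q4⟩ := hM
        have := go_core (A := dz + h) (A' := dw + h) (B := dy + g) (B' := dx + g)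
          (M := dw + c) (M' := dx + c) (P1 := dz + a) (P2 := dx + a) (P3 := dy + b)
          (P4 := dw + b)
          (by linarith) (by linarith) (by linarith) (by linarith)
          (by linarith) (by linarith) (by linarith)
          (by linarith) (by linarith) (by linarith) (by linarith)
          q3 q4 q2 q1 (by linarith)
        linarith [this]
  · -- min is among G, G', H, H' : conclude the (c,e) branch
    left
    rcases le_total (min (dx + g) (dy + g)) (min (dz + h) (dw + h)) with h2 | h2
    · rcases le_total (dx + g) (dy + g) with h3 | h3
      · -- M = G = dx+g, M' = G' = dy+g
        have hM : dx + g ≤ min (min (dy + e) (dz + e)) (min (dx + c) (dw + c)) :=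
          le_trans (le_min (le_min le_rfl h3) (le_trans (le_min le_rfl h3) h2)) hm
        simp only [le_min_iff] at hM
        obtain ⟨⟨q1, q2⟩, q3, q4⟩ := hM
        have := go_core (A := dy + e) (A' := dx + c) (B := dz + e) (B' := dw + c)
          (M := dx + g) (M' := dy + g) (P1 := dx + a) (P2 := dy + b) (P3 := dz + a)
          (P4 := dw + b)
          (by linarith) (by linarith) (by linarith) (by linarith)
          (by linarith) (by linarith) (by linarith)
          (by linarith) (by linarith) (by linarith) (by linarith)
          q1 q3 q2 q4 (by linarith)
        linarith [this]
      · -- M = G' = dy+g, M' = G = dx+g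
        have hM : dy + g ≤ min (min (dy + e) (dz + e)) (min (dx + c) (dw + c)) :=
          le_trans (le_min (le_min h3 le_rfl) (le_trans (le_min h3 le_rfl) h2)) hm
        simp only [le_min_iff] at hM
        obtain ⟨⟨q1, q2⟩, q3, q4⟩ := hM
        have := go_core (A := dz + e) (A' := dy + e) (B := dx + c) (B' := dw + c)
          (M := dy + g) (M' := dx + g) (P1 := dz + a) (P2 := dx + a) (P3 := dy + b)
          (P4 := dw + b)
          (by linarith) (by linarith) (by linarith) (by linarith)
          (by linarith) (by linarith) (by linarith)
          (by linarith) (by linarith) (by linarith) (by linarith)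
          q2 q1 q3 q4 (by linarith)
        linarith [this]
    · rcases le_total (dz + h) (dw + h) with h3 | h3
      · -- M = H = dz+h, M' = H' = dw+h
        have hM : dz + h ≤ min (min (dy + e) (dz + e)) (min (dx + c) (dw + c)) :=
          le_trans (le_min (le_trans (le_min le_rfl h3) h2) (le_min le_rfl h3)) hm
        simp only [le_min_iff] at hM
        obtain ⟨⟨q1, q2⟩, q3, q4⟩ := hM
        have := go_core (A := dx + c) (A' := dz + e) (B := dw + c) (B' := dy + e)
          (M := dz + h) (M' := dw + h) (P1 := dx + a) (P2 := dw + b) (P3 := dz + a)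
          (P4 := dy + b)
          (by linarith) (by linarith) (by linarith) (by linarith)
          (by linarith) (by linarith) (by linarith)
          (by linarith) (by linarith) (by linarith) (by linarith)
          q3 q2 q4 q1 (by linarith)
        linarith [this]
      · -- M = H' = dw+h, M' = H = dz+h
        have hM : dw + h ≤ min (min (dy + e) (dz + e)) (min (dx + c) (dw + c)) :=
          le_trans (le_min (le_trans (le_min h3 le_rfl) h2) (le_min h3 le_rfl)) hm
        simp only [le_min_iff] at hM
        obtain ⟨⟨q1, q2⟩, q3, q4⟩ := hM
        have := go_core (A := dx + c) (A' := dw + c) (B := dy + e) (B' := dz + e)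
          (M := dw + h) (M' := dz + h) (P1 := dx + a) (P2 := dz + a) (P3 := dy + b)
          (P4 := dw + b)
          (by linarith) (by linarith) (by linarith) (by linarith)
          (by linarith) (by linarith) (by linarith)
          (by linarith) (by linarith) (by linarith) (by linarith)
          q3 q4 q1 q2 (by linarith)
        linarith [this]

private lemma go_branch {dx dy dz dw a b p q : ℝ}
    (hdx : 0 < dx) (hdy : 0 < dy) (hdz : 0 < dz) (hdw : 0 < dw)
    (ha : 0 ≤ a) (hb : 0 ≤ b) (hp : 0 ≤ p) (hq : 0 ≤ q)
    (hkey : (dx + a) * ((dz + a) * ((dy + b) * (dw + b))) ≤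
      24 * ((dx + p) * ((dw + p) * ((dy + q) * (dz + q))))) :
    (1 / 2) * Real.log ((1 + a / dx) * (1 + a / dz)) +
      (1 / 2) * Real.log ((1 + b / dy) * (1 + b / dw)) ≤
    (1 / 2) * Real.log ((1 + p / dx) * (1 + p / dw)) +
      (1 / 2) * Real.log ((1 + q / dy) * (1 + q / dz)) + (1 / 2) * Real.log 24 := by
  have h1 : (0:ℝ) < 1 + a / dx := by positivity
  have h2 : (0:ℝ) < 1 + a / dz := by positivity
  have h3 : (0:ℝ) < 1 + b / dy := by positivity
  have h4 : (0:ℝ) < 1 + b / dw := by positivity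
  have h5 : (0:ℝ) < 1 + p / dx := by positivity
  have h6 : (0:ℝ) < 1 + p / dw := by positivity
  have h7 : (0:ℝ) < 1 + q / dy := by positivity
  have h8 : (0:ℝ) < 1 + q / dz := by positivity
  have hA : ((1 + a / dx) * (1 + a / dz)) * ((1 + b / dy) * (1 + b / dw)) ≤
      24 * (((1 + p / dx) * (1 + p / dw)) * ((1 + q / dy) * (1 + q / dz))) := by
    have e1 : 1 + a / dx = (dx + a) / dx := by field_simp
    have e2 : 1 + a / dz = (dz + a) / dz := by field_simp
    have e3 : 1 + b / dy = (dy + b) / dy := by field_simp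
    have e4 : 1 + b / dw = (dw + b) / dw := by field_simp
    have e5 : 1 + p / dx = (dx + p) / dx := by field_simp
    have e6 : 1 + p / dw = (dw + p) / dw := by field_simp
    have e7 : 1 + q / dy = (dy + q) / dy := by field_simp
    have e8 : 1 + q / dz = (dz + q) / dz := by field_simp
    have eL : ((1 + a / dx) * (1 + a / dz)) * ((1 + b / dy) * (1 + b / dw)) =
        ((dx + a) * ((dz + a) * ((dy + b) * (dw + b)))) / (dx * dy * dz * dw) := by
      field_simp
    have eR : 24 * (((1 + p / dx) * (1 + p / dw)) * ((1 + q / dy) * (1 + q / dz))) =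
        (24 * ((dx + p) * ((dw + p) * ((dy + q) * (dz + q))))) / (dx * dy * dz * dw) := by
      field_simp
    rw [eL, eR]
    exact (div_le_div_iff_of_pos_right (by positivity)).2 hkey
  have hL : Real.log (((1 + a / dx) * (1 + a / dz)) * ((1 + b / dy) * (1 + b / dw))) ≤
      Real.log (24 * (((1 + p / dx) * (1 + p / dw)) * ((1 + q / dy) * (1 + q / dz)))) :=
    Real.log_le_log (by positivity) hA
  have s1 : Real.log (((1 + a / dx) * (1 + a / dz)) * ((1 + b / dy) * (1 + b / dw))) =
      Real.log ((1 + a / dx) * (1 + a / dz)) + Real.log ((1 + b / dy) * (1 + b / dw)) :=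
    Real.log_mul (by positivity) (by positivity)
  have s2 : Real.log (24 * (((1 + p / dx) * (1 + p / dw)) * ((1 + q / dy) * (1 + q / dz)))) =
      Real.log 24 + (Real.log ((1 + p / dx) * (1 + p / dw)) +
        Real.log ((1 + q / dy) * (1 + q / dz))) := by
    rw [Real.log_mul (by norm_num) (by positivity),
      Real.log_mul (by positivity) (by positivity)]
  linarith [hL, s1, s2]

theorem stmt_3 {X : Type*} [MetricSpace X] (G : Set X)
    (hG : IsOpen G) (hGb : (frontier G).Nonempty) :
    ∀ x ∈ G, ∀ y ∈ G, ∀ z ∈ G, ∀ w ∈ G,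
      jGehringOsgood G x z + jGehringOsgood G y w ≤
        max (jGehringOsgood G x w + jGehringOsgood G y z)
            (jGehringOsgood G x y + jGehringOsgood G z w) + (1 / 2) * Real.log 24 := by
  intro x hx y hy z hz w hw
  have hdpos : ∀ p ∈ G, 0 < Metric.infDist p (frontier G) := by
    intro p hp
    refine (isClosed_frontier.notMem_iff_infDist_pos hGb).1 ?_
    intro hpf
    have : p ∈ G ∩ frontier G := ⟨hp, hpf⟩
    rw [hG.inter_frontier_eq] at this
    exact this
  have hdx := hdpos x hx
  have hdy := hdpos y hy
  have hdz := hdpos z hz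
  have hdw := hdpos w hw
  set dx := Metric.infDist x (frontier G) with hdxdef
  set dy := Metric.infDist y (frontier G) with hdydef
  set dz := Metric.infDist z (frontier G) with hdzdef
  set dw := Metric.infDist w (frontier G) with hdwdef
  have ta1 : dist x z ≤ dist x y + dist y z := dist_triangle x y z
  have ta2 : dist x z ≤ dist x w + dist z w := by
    rw [dist_comm z w]; exact dist_triangle x w z
  have tb1 : dist y w ≤ dist x y + dist x w := by
    rw [dist_comm x y]; exact dist_triangle y x w
  have tb2 : dist y w ≤ dist y z + dist z w := dist_triangle y z w
  have lxy : dy ≤ dx + dist x y := by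
    have h := Metric.infDist_le_infDist_add_dist (x := y) (y := x) (s := frontier G)
    rwa [dist_comm y x] at h
  have lyx : dx ≤ dy + dist x y := Metric.infDist_le_infDist_add_dist
  have lyz : dz ≤ dy + dist y z := by
    have h := Metric.infDist_le_infDist_add_dist (x := z) (y := y) (s := frontier G)
    rwa [dist_comm z y] at h
  have lzy : dy ≤ dz + dist y z := Metric.infDist_le_infDist_add_dist
  have lxw : dw ≤ dx + dist x w := by
    have h := Metric.infDist_le_infDist_add_dist (x := w) (y := x) (s := frontier G)
    rwa [dist_comm w x] at h
  have lwx : dx ≤ dw + dist x w := Metric.infDist_le_infDist_add_dist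
  have lzw : dw ≤ dz + dist z w := by
    have h := Metric.infDist_le_infDist_add_dist (x := w) (y := z) (s := frontier G)
    rwa [dist_comm w z] at h
  have lwz : dz ≤ dw + dist z w := Metric.infDist_le_infDist_add_dist
  have key := go_key hdx hdy hdz hdw dist_nonneg dist_nonneg dist_nonneg dist_nonneg
    dist_nonneg dist_nonneg ta1 ta2 tb1 tb2 lxy lyx lyz lzy lxw lwx lzw lwz
  rcases key with hk | hk
  · refine le_trans ?_ (add_le_add_left (le_max_left _ _) _)
    unfold jGehringOsgood
    exact go_branch hdx hdy hdz hdw dist_nonneg dist_nonneg dist_nonneg dist_nonneg hk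
  · refine le_trans ?_ (add_le_add_left (le_max_right _ _) _)
    unfold jGehringOsgood
    have B := go_branch (dx := dz) (dy := dy) (dz := dx) (dw := dw) (a := dist x z)
      (b := dist y w) (p := dist z w) (q := dist x y) hdz hdy hdx hdw
      dist_nonneg dist_nonneg dist_nonneg dist_nonneg (by linarith [hk])
    rw [mul_comm (1 + dist x z / dz) (1 + dist x z / dx),
      mul_comm (1 + dist x y / dy) (1 + dist x y / dx)] at B
    linarith [B]
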